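/- For every A ∈ M_n(ℂ), the 2n×2n block matrix [[|A*|, A], [A*, |A|]] is positive semidefinite. -/

import Mathlib

open Matrix
open scoped ComplexOrder

/-- The positive semidefinite square root of a positive semidefinite matrix
(the definition removed from Mathlib, restored with its old meaning). -/
noncomputable def Matrix.PosSemidef.sqrt {n : Type*} [Fintype n] [DecidableEq n]
    {A : Matrix n n ℂ} (hA : A.PosSemidef) : Matrix n n ℂ :=
  hA.1.eigenvectorUnitary.1 * diagonal ((↑) ∘ (√·) ∘ hA.1.eigenvalues) *
  (star hA.1.eigenvectorUnitary : Matrix n n ℂ)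

theorem Matrix.PosSemidef.posSemidef_sqrt {n : Type*} [Fintype n] [DecidableEq n]
    {A : Matrix n n ℂ} (hA : A.PosSemidef) : PosSemidef hA.sqrt := by
  apply PosSemidef.mul_mul_conjTranspose_same
  refine posSemidef_diagonal_iff.mpr fun i ↦ ?_
  simp only [Function.comp_apply]
  exact_mod_cast Real.sqrt_nonneg _

/-- The usual modulus `|Z| = (Zᴴ Z)^(1/2)` (positive semidefinite square root). -/
noncomputable def mAbs {k : Type*} [Fintype k] [DecidableEq k]
    (Z : Matrix k k ℂ) : Matrix k k ℂ :=
  (Matrix.posSemidef_conjTranspose_mul_self Z).sqrt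

lemma mAbs_posSemidef {k : Type*} [Fintype k] [DecidableEq k]
    (Z : Matrix k k ℂ) : (mAbs Z).PosSemidef :=
  Matrix.PosSemidef.posSemidef_sqrt _

lemma psd_half_smul {k : Type*} [Fintype k] [DecidableEq k]
    {M : Matrix k k ℂ} (h : M.PosSemidef) :
    ((2:ℂ)⁻¹ • M).PosSemidef := by
  constructor
  · unfold Matrix.IsHermitian
    rw [conjTranspose_smul, h.1]
    norm_num
  · exact (h.smul (show (0:ℂ) ≤ (2:ℂ)⁻¹ by simp [Complex.le_def])).2

/-- The arithmetic symmetric modulus `(|Z| + |Z*|)/2`. -/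
noncomputable def symMod {k : Type*} [Fintype k] [DecidableEq k]
    (Z : Matrix k k ℂ) : Matrix k k ℂ :=
  (2:ℂ)⁻¹ • (mAbs Z + mAbs Zᴴ)

lemma symMod_posSemidef {k : Type*} [Fintype k] [DecidableEq k]
    (Z : Matrix k k ℂ) : (symMod Z).PosSemidef :=
  psd_half_smul ((mAbs_posSemidef Z).add (mAbs_posSemidef Zᴴ))

lemma qsym_arg_psd {k : Type*} [Fintype k] [DecidableEq k]
    (Z : Matrix k k ℂ) :
    ((2:ℂ)⁻¹ • (mAbs Z ^ 2 + mAbs Zᴴ ^ 2)).PosSemidef :=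
  psd_half_smul (((mAbs_posSemidef Z).pow 2).add ((mAbs_posSemidef Zᴴ).pow 2))

/-- The quadratic symmetric modulus `((|Z|² + |Z*|²)/2)^(1/2)`. -/
noncomputable def qsymMod {k : Type*} [Fintype k] [DecidableEq k]
    (Z : Matrix k k ℂ) : Matrix k k ℂ :=
  (qsym_arg_psd Z).sqrt

lemma qsymMod_posSemidef {k : Type*} [Fintype k] [DecidableEq k]
    (Z : Matrix k k ℂ) : (qsymMod Z).PosSemidef :=
  Matrix.PosSemidef.posSemidef_sqrt _

/-- The Schatten `p`-norm, as the `ℓ^p` norm of the singular values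
(the eigenvalues of `|X|`). -/
noncomputable def schatten {k : Type*} [Fintype k] [DecidableEq k]
    (p : ℝ) (X : Matrix k k ℂ) : ℝ :=
  (∑ i, ((mAbs_posSemidef X).1.eigenvalues i) ^ p) ^ (1/p)

/-- The operator norm: the largest singular value. -/
noncomputable def opN {k : Type*} [Fintype k] [DecidableEq k]
    (X : Matrix k k ℂ) : ℝ :=
  ⨆ i, (mAbs_posSemidef X).1.eigenvalues i

/-- The Frobenius (Schatten-2) norm. -/
noncomputable def frob {k : Type*} [Fintype k] [DecidableEq k]
    (X : Matrix k k ℂ) : ℝ :=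
  Real.sqrt ((Xᴴ * X).trace.re)

theorem Matrix.PosSemidef.sqrt_eq_cfc {n : Type*} [Fintype n] [DecidableEq n]
    {A : Matrix n n ℂ} (hA : A.PosSemidef) : hA.sqrt = cfc Real.sqrt A := by
  rw [hA.1.cfc_eq]
  simp [IsHermitian.cfc, Matrix.PosSemidef.sqrt, Function.comp_def]

theorem Matrix.PosSemidef.sqrt_mul_self {n : Type*} [Fintype n] [DecidableEq n]
    {A : Matrix n n ℂ} (hA : A.PosSemidef) : hA.sqrt * hA.sqrt = A := by
  have hsa : IsSelfAdjoint A := hA.1.isSelfAdjoint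
  rw [hA.sqrt_eq_cfc]
  calc cfc Real.sqrt A * cfc Real.sqrt A = cfc (fun x => Real.sqrt x * Real.sqrt x) A :=
        (cfc_mul _ _ A).symm
    _ = cfc (fun x : ℝ => x) A := by
        apply cfc_congr
        intro x hx
        rw [hA.1.spectrum_real_eq_range_eigenvalues] at hx
        obtain ⟨i, rfl⟩ := hx
        exact Real.mul_self_sqrt (hA.eigenvalues_nonneg i)
    _ = A := cfc_id' ℝ A

theorem Matrix.PosSemidef.eq_sqrt_of_sq_eq {n : Type*} [Fintype n] [DecidableEq n]
    {A : Matrix n n ℂ} (hA : A.PosSemidef) (B : Matrix n n ℂ) (hB : B.PosSemidef)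
    (hAB : B ^ 2 = A) : B = hA.sqrt := by
  subst hAB
  have hsa : IsSelfAdjoint B := hB.1.isSelfAdjoint
  rw [hA.sqrt_eq_cfc, ← cfc_comp_pow Real.sqrt 2 B]
  calc B = cfc (fun x : ℝ => x) B := (cfc_id' ℝ B).symm
    _ = _ := by
        apply cfc_congr
        intro x hx
        rw [hB.1.spectrum_real_eq_range_eigenvalues] at hx
        obtain ⟨i, rfl⟩ := hx
        simp [Real.sqrt_sq (hB.eigenvalues_nonneg i)]

lemma mAbs_sq {k : Type*} [Fintype k] [DecidableEq k]
    (Z : Matrix k k ℂ) : mAbs Z * mAbs Z = Zᴴ * Z :=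
  Matrix.PosSemidef.sqrt_mul_self _

-- block diagonal PSD
lemma fromBlocks_diag_psd {k : Type*} [Fintype k] [DecidableEq k]
    {P Q : Matrix k k ℂ} (hP : P.PosSemidef) (hQ : Q.PosSemidef) :
    (Matrix.fromBlocks P 0 0 Q).PosSemidef := by
  have : Matrix.fromBlocks P 0 0 Q =
      (Matrix.fromBlocks hP.sqrt 0 0 hQ.sqrt)ᴴ *
      (Matrix.fromBlocks hP.sqrt 0 0 hQ.sqrt) := by
    rw [Matrix.fromBlocks_conjTranspose, Matrix.fromBlocks_multiply]
    simp [hP.posSemidef_sqrt.1.eq, hQ.posSemidef_sqrt.1.eq, hP.sqrt_mul_self, hQ.sqrt_mul_self]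
  rw [this]
  exact Matrix.posSemidef_conjTranspose_mul_self _

-- H + |H| is PSD for Hermitian H
lemma herm_add_abs_psd {k : Type*} [Fintype k] [DecidableEq k]
    {H : Matrix k k ℂ} (hH : H.IsHermitian) : (H + mAbs H).PosSemidef := by
  set U : Matrix k k ℂ := (hH.eigenvectorUnitary : Matrix k k ℂ) with hU
  set lam := hH.eigenvalues with hlam
  have hspec : H = U * Matrix.diagonal (RCLike.ofReal ∘ lam) * star U := hH.spectral_theorem
  have hUU : (star U) * U = 1 := Unitary.coe_star_mul_self hH.eigenvectorUnitary
  have hconj : ∀ D E : Matrix k k ℂ,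
      (U * D * star U) * (U * E * star U) = U * (D * E) * star U := by
    intro D E
    simp only [Matrix.mul_assoc]
    rw [← Matrix.mul_assoc (star U) U (E * star U), hUU, Matrix.one_mul]
  have habs : mAbs H = U * Matrix.diagonal (fun i => ((|lam i| : ℝ) : ℂ)) * star U := by
    symm
    apply Matrix.PosSemidef.eq_sqrt_of_sq_eq
    · exact (Matrix.posSemidef_diagonal_iff.mpr (fun i => by
        rw [Complex.zero_le_real]; positivity)).mul_mul_conjTranspose_same U
    · rw [pow_two, hconj, hH.eq]
      conv_rhs => rw [hspec]
      rw [hconj, Matrix.diagonal_mul_diagonal, Matrix.diagonal_mul_diagonal]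
      congr 1
      ext i
      simp [Function.comp, ← Complex.ofReal_mul, abs_mul_abs_self]
  have : H + mAbs H = U * Matrix.diagonal (fun i => ((lam i + |lam i| : ℝ) : ℂ)) * star U := by
    rw [habs]
    conv_lhs => rw [hspec]
    rw [← Matrix.add_mul, ← Matrix.mul_add, Matrix.diagonal_add]
    congr 2
    ext i
    push_cast
    simp [Function.comp]
  rw [this]
  exact (Matrix.posSemidef_diagonal_iff.mpr (fun i => by
    rw [Complex.zero_le_real]; linarith [neg_abs_le (lam i)])).mul_mul_conjTranspose_same U


/-- The block matrix `[[|A*|, A], [A*, |A|]]` is positive semidefinite. -/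
theorem stmt4 (n : ℕ) (A : Matrix (Fin n) (Fin n) ℂ) :
    (Matrix.fromBlocks (mAbs Aᴴ) A Aᴴ (mAbs A)).PosSemidef := by
  set H : Matrix (Fin n ⊕ Fin n) (Fin n ⊕ Fin n) ℂ := Matrix.fromBlocks 0 A Aᴴ 0
  have hH : H.IsHermitian := by
    unfold Matrix.IsHermitian
    simp [H, Matrix.fromBlocks_conjTranspose]
  have habs : mAbs H = Matrix.fromBlocks (mAbs Aᴴ) 0 0 (mAbs A) := by
    symm
    apply Matrix.PosSemidef.eq_sqrt_of_sq_eq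
    · exact fromBlocks_diag_psd (mAbs_posSemidef Aᴴ) (mAbs_posSemidef A)
    · rw [pow_two, Matrix.fromBlocks_multiply]
      simp [mAbs_sq, H, Matrix.fromBlocks_conjTranspose, Matrix.fromBlocks_multiply]
  have key := herm_add_abs_psd hH
  rw [habs] at key
  convert key using 1
  simp [H, Matrix.fromBlocks_add]
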